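/- Let p ≥ 7 be a prime, s ≥ 1 an integer, and let (α, β) be the hypergeometric datum with α = {1/2, 1/2, 1/2, 1/2} and β = {1, 1, 4/3, 2/3}. Then for all 0 ≤ k ≤ p^s - 1, p^s · H(k) ∈ ℤ_p, where H(k) = (1/2)_k^4 / ((4/3)_k (2/3)_k (k!)^2). In particular p^s · Σ_{k=0}^{p^s-1} H(k) ∈ ℤ_p. -/

import Mathlib

/-- The rising factorial (Pochhammer symbol) `(a)_k = a(a+1)⋯(a+k-1)`. -/
def risingFact {R : Type*} [CommRing R] (a : R) (k : ℕ) : R :=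
  ∏ i ∈ Finset.range k, (a + (i : R))

lemma risingFact_succ {R : Type*} [CommRing R] (a : R) (k : ℕ) :
    risingFact a (k + 1) = risingFact a k * (a + (k : R)) := by
  simp [risingFact, Finset.prod_range_succ]

lemma rf_half (k : ℕ) :
    risingFact (1/2 : ℚ) k = ((2 * k).factorial : ℚ) / (4 ^ k * (k.factorial : ℚ)) := by
  induction k with
  | zero => simp [risingFact]
  | succ k ih =>
    rw [risingFact_succ, ih]
    have h2 : 2 * (k + 1) = (2 * k + 1) + 1 := by ring
    rw [h2, Nat.factorial_succ (2 * k + 1), Nat.factorial_succ (2 * k), Nat.factorial_succ k]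
    have h4 : (4 : ℚ) ^ k ≠ 0 := by positivity
    have hf : ((k.factorial : ℚ)) ≠ 0 := by
      exact_mod_cast k.factorial_ne_zero
    push_cast
    field_simp
    ring

lemma rf_thirds (k : ℕ) :
    risingFact (4/3 : ℚ) k * risingFact (2/3 : ℚ) k =
      ((3 * k + 1).factorial : ℚ) / (27 ^ k * (k.factorial : ℚ)) := by
  induction k with
  | zero => simp [risingFact]
  | succ k ih =>
    rw [risingFact_succ, risingFact_succ]
    have h3 : 3 * (k + 1) + 1 = ((3 * k + 1) + 1 + 1) + 1 := by ring
    rw [h3, Nat.factorial_succ (3 * k + 1 + 1 + 1), Nat.factorial_succ (3 * k + 1 + 1),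
      Nat.factorial_succ (3 * k + 1), Nat.factorial_succ k]
    have h27 : (27 : ℚ) ^ k ≠ 0 := by positivity
    have hf : ((k.factorial : ℚ)) ≠ 0 := by exact_mod_cast k.factorial_ne_zero
    have : risingFact (4/3 : ℚ) k * risingFact (2/3 : ℚ) k * ((4/3 + k) * (2/3 + k)) =
        ((3 * k + 1).factorial : ℚ) / (27 ^ k * (k.factorial : ℚ)) *
          ((4/3 + k) * (2/3 + k)) := by rw [ih]
    calc risingFact (4/3 : ℚ) k * (4/3 + k) * (risingFact (2/3 : ℚ) k * (2/3 + k))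
        = risingFact (4/3 : ℚ) k * risingFact (2/3 : ℚ) k * ((4/3 + k) * (2/3 + k)) := by ring
      _ = ((3 * k + 1).factorial : ℚ) / (27 ^ k * (k.factorial : ℚ)) *
          ((4/3 + k) * (2/3 + k)) := this
      _ = _ := by push_cast; field_simp; ring

/-- Closed form for `H`. -/
lemma H_closed (k : ℕ) (H : ℕ → ℚ)
    (hH : ∀ k, H k = risingFact (1/2 : ℚ) k ^ 4 /
        (risingFact (4/3 : ℚ) k * risingFact (2/3 : ℚ) k * (k.factorial : ℚ) ^ 2)) :
    H k = ((27 ^ k * ((2 * k).factorial) ^ 4 : ℕ) : ℚ) /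
        ((256 ^ k * (k.factorial) ^ 5 * ((3 * k + 1).factorial) : ℕ) : ℚ) := by
  rw [hH, rf_half, rf_thirds]
  have hf : ((k.factorial : ℚ)) ≠ 0 := by exact_mod_cast k.factorial_ne_zero
  have hf2 : (((2 * k).factorial : ℚ)) ≠ 0 := by exact_mod_cast (2 * k).factorial_ne_zero
  have hf3 : (((3 * k + 1).factorial : ℚ)) ≠ 0 := by
    exact_mod_cast (3 * k + 1).factorial_ne_zero
  have h4 : (4 : ℚ) ^ k ≠ 0 := by positivity
  have h27 : (27 : ℚ) ^ k ≠ 0 := by positivity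
  have h256 : ((256 : ℚ)) ^ k = ((4 : ℚ) ^ k) ^ 4 := by
    rw [← pow_mul, mul_comm k 4, pow_mul]; norm_num
  push_cast
  rw [h256]
  field_simp

/-- The elementary division inequality. -/
lemma key_div (q k : ℕ) (hq : 2 ≤ q) :
    5 * (k / q) + (3 * k + 1) / q ≤ 4 * (2 * k / q) + 1 := by
  have hq0 : 0 < q := by omega
  obtain ⟨a, r, hr, rfl⟩ : ∃ a r, r < q ∧ k = q * a + r :=
    ⟨k / q, k % q, Nat.mod_lt _ hq0, by rw [Nat.div_add_mod]⟩
  have h1 : (q * a + r) / q = a + r / q := by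
    rw [Nat.mul_add_div hq0]
  have h2 : 2 * (q * a + r) / q = 2 * a + 2 * r / q := by
    have : 2 * (q * a + r) = q * (2 * a) + 2 * r := by ring
    rw [this, Nat.mul_add_div hq0]
  have h3 : (3 * (q * a + r) + 1) / q = 3 * a + (3 * r + 1) / q := by
    have : 3 * (q * a + r) + 1 = q * (3 * a) + (3 * r + 1) := by ring
    rw [this, Nat.mul_add_div hq0]
  rw [h1, h2, h3]
  have hrq : r / q = 0 := Nat.div_eq_of_lt hr
  rw [hrq]
  have hkey : (3 * r + 1) / q ≤ 4 * (2 * r / q) + 1 := by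
    rcases Nat.lt_or_ge (3 * r + 1) (2 * q) with h | h
    · have hfle : (3 * r + 1) / q ≤ 1 := by
        rw [Nat.div_le_iff_le_mul_add_pred hq0]
        omega
      exact le_trans hfle (Nat.le_add_left 1 _)
    · have h2r : q ≤ 2 * r := by omega
      have hge : 1 ≤ 2 * r / q := (Nat.one_le_div_iff hq0).2 h2r
      have hle : (3 * r + 1) / q ≤ 3 := by
        have h3q : 3 * r + 1 ≤ 3 * q := by omega
        calc (3 * r + 1) / q ≤ 3 * q / q := Nat.div_le_div_right h3q
          _ = 3 := Nat.mul_div_cancel 3 hq0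
      calc (3 * r + 1) / q ≤ 3 := hle
        _ ≤ 4 * 1 + 1 := by norm_num
        _ ≤ 4 * (2 * r / q) + 1 := Nat.add_le_add (Nat.mul_le_mul_left 4 hge) le_rfl
  calc 5 * (a + 0) + (3 * a + (3 * r + 1) / q) = 8 * a + (3 * r + 1) / q := by ring
    _ ≤ 8 * a + (4 * (2 * r / q) + 1) := Nat.add_le_add_left hkey _
    _ = 4 * (2 * a + 2 * r / q) + 1 := by ring

/-- Main valuation inequality. -/
lemma key_val (p s k : ℕ) [hp : Fact p.Prime] (hp7 : 7 ≤ p) (hk : k < p ^ s) :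
    5 * padicValNat p (k.factorial) + padicValNat p ((3 * k + 1).factorial) ≤
      4 * padicValNat p ((2 * k).factorial) + s := by
  have hp2 : 2 ≤ p := by omega
  have hps : 0 < p ^ s := Nat.pow_pos (by omega)
  have hss : p ^ s ≤ p ^ (s + 1) := Nat.pow_le_pow_right (by omega) (by omega)
  have hmul : p ^ (s + 1) = p * p ^ s := by rw [pow_succ]; ring
  have hb1 : Nat.log p k < s + 1 := by
    rcases Nat.eq_zero_or_pos k with h | h
    · simp [h]
    · exact Nat.log_lt_of_lt_pow h.ne' (by omega)
  have hb2 : Nat.log p (2 * k) < s + 1 := by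
    rcases Nat.eq_zero_or_pos k with h | h
    · simp [h]
    · refine Nat.log_lt_of_lt_pow (by omega) ?_
      have : 2 * k < 2 * p ^ s := by omega
      have h2 : 2 * p ^ s ≤ p * p ^ s := Nat.mul_le_mul_right _ (by omega)
      omega
  have hb3 : Nat.log p (3 * k + 1) < s + 1 := by
    refine Nat.log_lt_of_lt_pow (by omega) ?_
    have : 3 * k + 1 ≤ 3 * p ^ s := by omega
    have h3 : 3 * p ^ s < p * p ^ s := Nat.mul_lt_mul_of_lt_of_le (by omega) le_rfl hps
    omega
  rw [padicValNat_factorial hb1, padicValNat_factorial hb2, padicValNat_factorial hb3]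
  calc 5 * ∑ i ∈ Finset.Ico 1 (s + 1), k / p ^ i +
        ∑ i ∈ Finset.Ico 1 (s + 1), (3 * k + 1) / p ^ i
      = ∑ i ∈ Finset.Ico 1 (s + 1), (5 * (k / p ^ i) + (3 * k + 1) / p ^ i) := by
        rw [Finset.mul_sum, ← Finset.sum_add_distrib]
    _ ≤ ∑ i ∈ Finset.Ico 1 (s + 1), (4 * (2 * k / p ^ i) + 1) := by
        apply Finset.sum_le_sum
        intro i hi
        have hi1 : 1 ≤ i := (Finset.mem_Ico.1 hi).1
        exact key_div (p ^ i) k (le_trans hp2 (Nat.le_self_pow (by omega) p))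
    _ = 4 * ∑ i ∈ Finset.Ico 1 (s + 1), 2 * k / p ^ i + s := by
        rw [Finset.sum_add_distrib, ← Finset.mul_sum, Finset.sum_const, Nat.card_Ico]
        simp

theorem stmt13 (p : ℕ) [Fact p.Prime] (hp : 7 ≤ p) (s : ℕ) (hs : 1 ≤ s)
    (H : ℕ → ℚ)
    (hH : ∀ k, H k = risingFact (1/2 : ℚ) k ^ 4 /
        (risingFact (4/3 : ℚ) k * risingFact (2/3 : ℚ) k * (k.factorial : ℚ) ^ 2)) :
    (∀ k ≤ p ^ s - 1, ‖((((p : ℚ) ^ s * H k) : ℚ) : ℚ_[p])‖ ≤ 1) ∧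
      ‖((((p : ℚ) ^ s * ∑ k ∈ Finset.range (p ^ s), H k) : ℚ) : ℚ_[p])‖ ≤ 1 := by
  have hp2 : 2 ≤ p := by omega
  have hps : 0 < p ^ s := Nat.pow_pos (by omega)
  have main : ∀ k < p ^ s, ‖((((p : ℚ) ^ s * H k) : ℚ) : ℚ_[p])‖ ≤ 1 := by
    intro k hk
    set N : ℕ := p ^ s * (27 ^ k * ((2 * k).factorial) ^ 4) with hN
    set D : ℕ := 256 ^ k * (k.factorial) ^ 5 * ((3 * k + 1).factorial) with hD
    have hNpos : 0 < N := by
      apply Nat.mul_pos hps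
      exact Nat.mul_pos (Nat.pow_pos (by norm_num)) (Nat.pow_pos (2 * k).factorial_pos)
    have hDpos : 0 < D := by
      apply Nat.mul_pos
      exact Nat.mul_pos (Nat.pow_pos (by norm_num)) (Nat.pow_pos k.factorial_pos)
      exact (3 * k + 1).factorial_pos
    have hq : ((p : ℚ) ^ s * H k) = (N : ℚ) / (D : ℚ) := by
      rw [H_closed k H hH, hN, hD]
      push_cast
      ring
    have hN0 : (N : ℚ) ≠ 0 := by exact_mod_cast hNpos.ne'
    have hD0 : (D : ℚ) ≠ 0 := by exact_mod_cast hDpos.ne'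
    have hq0 : ((p : ℚ) ^ s * H k) ≠ 0 := by
      rw [hq]; exact div_ne_zero hN0 hD0
    -- valuation computation
    have hval : 0 ≤ padicValRat p ((p : ℚ) ^ s * H k) := by
      rw [hq, padicValRat.div hN0 hD0, padicValRat.of_nat, padicValRat.of_nat]
      have hvN : padicValNat p N = s + 4 * padicValNat p ((2 * k).factorial) := by
        rw [hN, padicValNat.mul (by positivity) (by positivity),
          padicValNat.mul (by positivity) (by positivity),
          padicValNat.prime_pow, padicValNat.pow _ _,
          padicValNat.pow _ _]
        have h27 : padicValNat p 27 = 0 := by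
          apply padicValNat.eq_zero_of_not_dvd
          intro h
          rw [show (27 : ℕ) = 3 ^ 3 by norm_num] at h
          have h3 : p ∣ 3 := Nat.Prime.dvd_of_dvd_pow Fact.out h
          exact absurd (Nat.le_of_dvd (by norm_num) h3) (by omega)
        rw [h27]; ring
      have hvD : padicValNat p D =
          5 * padicValNat p (k.factorial) + padicValNat p ((3 * k + 1).factorial) := by
        rw [hD, padicValNat.mul (by positivity) (by positivity),
          padicValNat.mul (by positivity) (by positivity),
          padicValNat.pow _ _, padicValNat.pow _ _]
        have h256 : padicValNat p 256 = 0 := by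
          apply padicValNat.eq_zero_of_not_dvd
          intro h
          rw [show (256 : ℕ) = 2 ^ 8 by norm_num] at h
          have h2' : p ∣ 2 := Nat.Prime.dvd_of_dvd_pow Fact.out h
          exact absurd (Nat.le_of_dvd (by norm_num) h2') (by omega)
        rw [h256]; ring
      rw [hvN, hvD]
      have := key_val p s k hp hk
      omega
    -- from valuation to norm
    rw [Padic.eq_padicNorm]
    have hnorm : padicNorm p ((p : ℚ) ^ s * H k) ≤ 1 := by
      rw [padicNorm.eq_zpow_of_nonzero hq0]
      apply zpow_le_one_of_nonpos₀
      · exact_mod_cast Nat.one_le_iff_ne_zero.2 (by omega)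
      · omega
    exact_mod_cast hnorm
  constructor
  · intro k hk
    exact main k (by omega)
  · have hcast : ((((p : ℚ) ^ s * ∑ k ∈ Finset.range (p ^ s), H k) : ℚ) : ℚ_[p]) =
        ∑ k ∈ Finset.range (p ^ s), ((((p : ℚ) ^ s * H k) : ℚ) : ℚ_[p]) := by
      rw [Finset.mul_sum]
      push_cast
      rfl
    rw [hcast]
    refine IsUltrametricDist.norm_sum_le_of_forall_le_of_nonneg (by norm_num) ?_
    intro i hi
    exact main i (Finset.mem_range.1 hi)
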